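/- Let 0 < α < 1 and B > 0. Suppose u : ℝ → ℝ is C¹ on (-1,1) and satisfies u'(x) = B|u(x)|^α for all x ∈ (-1,1). If u(0) ≠ 0 then sup_{-1 < x < 1} |u(x)| > ((1-α)B)^(1/(1-α)). -/

import Mathlib

open Set

lemma stmt4_aux (α B : ℝ) (hα0 : 0 < α) (hα1 : α < 1) (hB : 0 < B) (u : ℝ → ℝ)
    (hC1 : ContDiffOn ℝ 1 u (Set.Ioo (-1 : ℝ) 1))
    (hode : ∀ x ∈ Set.Ioo (-1 : ℝ) 1, deriv u x = B * |u x| ^ α)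
    (h0 : 0 < u 0) :
    ∃ x ∈ Set.Ioo (-1 : ℝ) 1, ((1 - α) * B) ^ (1 / (1 - α)) < |u x| := by
  have h1α : (0:ℝ) < 1 - α := by linarith
  have hd : ∀ x ∈ Set.Ioo (-1:ℝ) 1, HasDerivAt u (B * |u x| ^ α) x := by
    intro x hx
    have h := ((hC1.differentiableOn one_ne_zero).differentiableAt
      (isOpen_Ioo.mem_nhds hx)).hasDerivAt
    rwa [hode x hx] at h
  have hmono : MonotoneOn u (Set.Ioo (-1:ℝ) 1) := by
    apply monotoneOn_of_deriv_nonneg (convex_Ioo _ _) hC1.continuousOn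
    · rw [interior_Ioo]; exact hC1.differentiableOn one_ne_zero
    · intro x hx
      rw [interior_Ioo] at hx
      rw [hode x hx]
      positivity
  have hpos : ∀ x ∈ Set.Ico (0:ℝ) 1, 0 < u x := by
    intro x hx
    refine lt_of_lt_of_le h0 (hmono ⟨by norm_num, by norm_num⟩
      ⟨by linarith [hx.1], hx.2⟩ hx.1)
  set v : ℝ → ℝ := fun x => u x ^ (1 - α) with hv_def
  have hv : ∀ x ∈ Set.Ioo (0:ℝ) 1, HasDerivAt v ((1-α)*B) x := by
    intro x hx
    have hxI : x ∈ Set.Ioo (-1:ℝ) 1 := ⟨by linarith [hx.1], hx.2⟩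
    have hux : 0 < u x := hpos x ⟨hx.1.le, hx.2⟩
    have h1 := hd x hxI
    rw [abs_of_pos hux] at h1
    have h2 := (Real.hasDerivAt_rpow_const (x := u x) (p := 1-α) (Or.inl hux.ne')).comp x h1
    have key : u x ^ (1 - α - 1) * u x ^ α = 1 := by
      rw [← Real.rpow_add hux]
      norm_num
    refine HasDerivAt.congr_deriv h2 ?_
    have : (1 - α) * u x ^ (1 - α - 1) * (B * u x ^ α)
        = (1-α)*B * (u x ^ (1 - α - 1) * u x ^ α) := by ring
    rw [this, key, mul_one]
  set g : ℝ → ℝ := fun x => v x - (1-α)*B*x with hg_def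
  have hg : ∀ x ∈ Set.Ioo (0:ℝ) 1, HasDerivAt g 0 x := by
    intro x hx
    have := (hv x hx).sub ((hasDerivAt_id x).const_mul ((1-α)*B))
    exact this.congr_deriv (by ring)
  have hcontg : ContinuousOn g (Set.Ico (0:ℝ) 1) := by
    have hsub : Set.Ico (0:ℝ) 1 ⊆ Set.Ioo (-1:ℝ) 1 := fun x hx =>
      ⟨by linarith [hx.1], hx.2⟩
    have hu : ContinuousOn u (Set.Ico (0:ℝ) 1) := hC1.continuousOn.mono hsub
    exact (hu.rpow_const fun x _ => Or.inr h1α.le).sub (by fun_prop)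
  have hdiffg : DifferentiableOn ℝ g (interior (Set.Ico (0:ℝ) 1)) := by
    rw [interior_Ico]
    exact fun x hx => ((hg x hx).differentiableAt).differentiableWithinAt
  have hderivg : ∀ x ∈ interior (Set.Ico (0:ℝ) 1), deriv g x = 0 := by
    rw [interior_Ico]
    exact fun x hx => (hg x hx).deriv
  have hmonog : MonotoneOn g (Set.Ico (0:ℝ) 1) :=
    monotoneOn_of_deriv_nonneg (convex_Ico _ _) hcontg hdiffg
      (fun x hx => (hderivg x hx).ge)
  have hantig : AntitoneOn g (Set.Ico (0:ℝ) 1) :=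
    antitoneOn_of_deriv_nonpos (convex_Ico _ _) hcontg hdiffg
      (fun x hx => (hderivg x hx).le)
  have h0m : (0:ℝ) ∈ Set.Ico (0:ℝ) 1 := ⟨le_refl _, by norm_num⟩
  have heq : ∀ x ∈ Set.Ico (0:ℝ) 1, v x = v 0 + (1-α)*B*x := by
    intro x hx
    have h1 := hmonog h0m hx hx.1
    have h2 := hantig h0m hx hx.1
    have : g x = g 0 := le_antisymm h2 h1
    simp only [hg_def] at this
    have h00 : (1-α)*B*(0:ℝ) = 0 := by ring
    linarith [this]
  -- choose x
  set ε : ℝ := v 0 with hε_def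
  have hε : 0 < ε := Real.rpow_pos_of_pos h0 _
  set c : ℝ := (1-α)*B with hc_def
  have hc : 0 < c := by positivity
  set x : ℝ := max (1/2) (1 - ε/(2*c)) with hx_def
  have hx1 : x < 1 := by
    apply max_lt (by norm_num)
    have : 0 < ε/(2*c) := by positivity
    linarith
  have hx0 : (0:ℝ) ≤ x := le_trans (by norm_num) (le_max_left _ _)
  have hxmem : x ∈ Set.Ico (0:ℝ) 1 := ⟨hx0, hx1⟩
  have hvx : c < v x := by
    have h1 : 1 - ε/(2*c) ≤ x := le_max_right _ _
    have h2 : c * (1 - ε/(2*c)) ≤ c * x := by nlinarith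
    have h3 : c * (1 - ε/(2*c)) = c - ε/2 := by field_simp
    have h4 := heq x hxmem
    nlinarith
  have hux : 0 < u x := hpos x hxmem
  refine ⟨x, ⟨by linarith, hx1⟩, ?_⟩
  rw [abs_of_pos hux]
  have hkey : (c) ^ (1/(1-α)) < (v x) ^ (1/(1-α)) :=
    Real.rpow_lt_rpow hc.le hvx (by positivity)
  have : (v x) ^ (1/(1-α)) = u x := by
    rw [hv_def, one_div]
    exact Real.rpow_rpow_inv hux.le h1α.ne'
  rwa [this] at hkey

theorem stmt4 (α B : ℝ) (hα0 : 0 < α) (hα1 : α < 1) (hB : 0 < B) (u : ℝ → ℝ)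
    (hC1 : ContDiffOn ℝ 1 u (Set.Ioo (-1 : ℝ) 1))
    (hode : ∀ x ∈ Set.Ioo (-1 : ℝ) 1, deriv u x = B * |u x| ^ α)
    (h0 : u 0 ≠ 0) :
    ∃ x ∈ Set.Ioo (-1 : ℝ) 1, ((1 - α) * B) ^ (1 / (1 - α)) < |u x| := by
  rcases h0.lt_or_gt with hneg | hpos
  · -- u 0 < 0: apply aux to w x = -u (-x)
    set w : ℝ → ℝ := fun x => -u (-x) with hw_def
    have hmaps : Set.MapsTo (fun x : ℝ => -x) (Set.Ioo (-1:ℝ) 1) (Set.Ioo (-1:ℝ) 1) := by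
      intro y hy
      simp only [Set.mem_Ioo] at hy ⊢
      constructor <;> linarith [hy.1, hy.2]
    have hC1w : ContDiffOn ℝ 1 w (Set.Ioo (-1:ℝ) 1) :=
      (hC1.comp (contDiff_neg.contDiffOn) hmaps).neg
    have hd : ∀ x ∈ Set.Ioo (-1:ℝ) 1, HasDerivAt u (B * |u x| ^ α) x := by
      intro x hx
      have h := ((hC1.differentiableOn one_ne_zero).differentiableAt
        (isOpen_Ioo.mem_nhds hx)).hasDerivAt
      rwa [hode x hx] at h
    have hodew : ∀ x ∈ Set.Ioo (-1:ℝ) 1, deriv w x = B * |w x| ^ α := by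
      intro x hx
      have hxn : -x ∈ Set.Ioo (-1:ℝ) 1 := hmaps hx
      have h1 : HasDerivAt (fun y : ℝ => u (-y)) ((B * |u (-x)| ^ α) * (-1)) x :=
        (hd (-x) hxn).comp x (hasDerivAt_neg x)
      have h2 : HasDerivAt w (-((B * |u (-x)| ^ α) * (-1))) x := h1.neg
      rw [h2.deriv]
      simp [hw_def, abs_neg]
    have h0w : 0 < w 0 := by simp [hw_def]; linarith
    obtain ⟨x, hx, hlt⟩ := stmt4_aux α B hα0 hα1 hB w hC1w hodew h0w
    refine ⟨-x, ⟨by linarith [hx.2], by linarith [hx.1]⟩, ?_⟩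
    simpa [hw_def, abs_neg] using hlt
  · exact stmt4_aux α B hα0 hα1 hB u hC1 hode hpos
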